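/- Assume the standing assumptions. Then (as cardinals, Module.rank over ℂ): dim ker(U − a·I) = dim ker(T − I), dim ker(U + a·I) = dim ker(T + I), dim ker(U + b·I) = dim(ker d ∩ ker(S + I)), and dim ker(U − b·I) = dim(ker d ∩ ker(S − I)). -/

import Mathlib

set_option maxHeartbeats 1000000

open ContinuousLinearMap

universe u1 u2

section Aux

variable {H : Type u1} {K : Type u2}
  [NormedAddCommGroup H] [InnerProductSpace ℂ H] [CompleteSpace H]
  [NormedAddCommGroup K] [InnerProductSpace ℂ K] [CompleteSpace K]

local notation "⟪" x ", " y "⟫" => @inner ℂ _ _ x y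

lemma lemA (a b : ℂ) (d : H →L[ℂ] K) (hd : d ∘L adjoint d = 1)
    (S : H →L[ℂ] H) (hS2 : S ∘L S = 1)
    (ha : a ≠ 0) (hab : a - b ≠ 0) (hab' : a + b ≠ 0) :
    Cardinal.lift.{u2} (Module.rank ℂ
      (LinearMap.ker ((S ∘L (a • (adjoint d ∘L d) + b • (1 - adjoint d ∘L d)) - a • (1 : H →L[ℂ] H) : H →L[ℂ] H) : H →ₗ[ℂ] H))) =
    Cardinal.lift.{u1} (Module.rank ℂ
      (LinearMap.ker ((d ∘L S ∘L adjoint d - (1 : K →L[ℂ] K) : K →L[ℂ] K) : K →ₗ[ℂ] K))) := by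
  have hdd : ∀ u, d (adjoint d u) = u := fun u => by
    simpa using ContinuousLinearMap.ext_iff.mp hd u
  have hSS : ∀ y, S (S y) = y := fun y => by
    simpa using ContinuousLinearMap.ext_iff.mp hS2 y
  have hmem1 : ∀ x : H,
      x ∈ LinearMap.ker ((S ∘L (a • (adjoint d ∘L d) + b • (1 - adjoint d ∘L d)) - a • (1 : H →L[ℂ] H) : H →L[ℂ] H) : H →ₗ[ℂ] H) ↔
      S (a • adjoint d (d x) + b • (x - adjoint d (d x))) = a • x := by
    intro x
    rw [LinearMap.mem_ker]
    simp only [ContinuousLinearMap.coe_coe, ContinuousLinearMap.sub_apply, ContinuousLinearMap.comp_apply,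
      ContinuousLinearMap.add_apply, ContinuousLinearMap.smul_apply,
      ContinuousLinearMap.one_apply, sub_eq_zero]
  have hmem2 : ∀ u : K,
      u ∈ LinearMap.ker ((d ∘L S ∘L adjoint d - (1 : K →L[ℂ] K) : K →L[ℂ] K) : K →ₗ[ℂ] K) ↔ d (S (adjoint d u)) = u := by
    intro u
    rw [LinearMap.mem_ker]
    simp only [ContinuousLinearMap.coe_coe, ContinuousLinearMap.sub_apply, ContinuousLinearMap.comp_apply,
      ContinuousLinearMap.one_apply, sub_eq_zero]
  have key : ∀ x : H, S (a • adjoint d (d x) + b • (x - adjoint d (d x))) = a • x →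
      d (S (adjoint d (d x))) = d x ∧
      b • adjoint d (d x) + a • S (adjoint d (d x)) = (a + b) • x := by
    intro x hx
    have hx2 : a • adjoint d (d x) + b • (x - adjoint d (d x)) = a • S x := by
      have h := congrArg S hx
      rw [hSS, map_smul] at h
      exact h
    have hE : (a - b) • adjoint d (d x) = a • S x - b • x := by
      rw [← hx2]; module
    have hSp : (a - b) • S (adjoint d (d x)) = a • x - b • S x := by
      have h := congrArg S hE
      rw [map_smul, map_sub, map_smul, map_smul, hSS] at h
      exact h
    have hPS : adjoint d (d (S x)) = adjoint d (d x) := by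
      refine smul_right_injective H ha ?_
      show a • adjoint d (d (S x)) = a • adjoint d (d x)
      have h := congrArg (fun y => adjoint d (d y)) hE
      simp only [map_smul, map_sub] at h
      rw [hdd] at h
      linear_combination (norm := module) -h
    have hdS : d (S x) = d x := by
      have h := congrArg d hPS
      rwa [hdd, hdd] at h
    have h3 : (a - b) • d (S (adjoint d (d x))) = a • d x - b • d x := by
      have h := congrArg d hSp
      rw [map_smul, map_sub, map_smul, map_smul, hdS] at h
      exact h
    constructor
    · refine smul_right_injective K hab ?_
      show (a - b) • d (S (adjoint d (d x))) = (a - b) • d x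
      linear_combination (norm := module) h3
    · refine smul_right_injective H hab ?_
      show (a - b) • (b • adjoint d (d x) + a • S (adjoint d (d x))) = (a - b) • ((a + b) • x)
      linear_combination (norm := module) b • hE + a • hSp
  have bwd : ∀ u : K, d (S (adjoint d u)) = u →
      (S (a • adjoint d (d (b • adjoint d u + a • S (adjoint d u))) +
        b • ((b • adjoint d u + a • S (adjoint d u)) -
          adjoint d (d (b • adjoint d u + a • S (adjoint d u))))) =
        a • (b • adjoint d u + a • S (adjoint d u))) ∧
      d (b • adjoint d u + a • S (adjoint d u)) = (a + b) • u := by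
    intro u hu
    have hdx : d (b • adjoint d u + a • S (adjoint d u)) = (a + b) • u := by
      rw [map_add, map_smul, map_smul, hdd, hu]; module
    refine ⟨?_, hdx⟩
    rw [hdx, map_smul]
    have harg : a • ((a + b) • adjoint d u) +
        b • ((b • adjoint d u + a • S (adjoint d u)) - (a + b) • adjoint d u)
        = (a * a) • adjoint d u + (a * b) • S (adjoint d u) := by module
    rw [harg, map_add, map_smul, map_smul, hSS]
    module
  have e : (LinearMap.ker ((S ∘L (a • (adjoint d ∘L d) + b • (1 - adjoint d ∘L d)) - a • (1 : H →L[ℂ] H) : H →L[ℂ] H) : H →ₗ[ℂ] H)) ≃ₗ[ℂ]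
      (LinearMap.ker ((d ∘L S ∘L adjoint d - (1 : K →L[ℂ] K) : K →L[ℂ] K) : K →ₗ[ℂ] K)) :=
    { toFun := fun x => ⟨d x.1, (hmem2 _).mpr (key x.1 ((hmem1 _).mp x.2)).1⟩
      map_add' := fun x y => Subtype.ext (by exact map_add d x.1 y.1)
      map_smul' := fun c x => Subtype.ext (by exact map_smul d c x.1)
      invFun := fun u => ⟨(a + b)⁻¹ • (b • adjoint d u.1 + a • S (adjoint d u.1)),
        Submodule.smul_mem _ _ ((hmem1 _).mpr (bwd u.1 ((hmem2 _).mp u.2)).1)⟩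
      left_inv := fun x => by
        apply Subtype.ext
        show (a + b)⁻¹ • (b • adjoint d (d x.1) + a • S (adjoint d (d x.1))) = x.1
        rw [(key x.1 ((hmem1 _).mp x.2)).2, smul_smul, inv_mul_cancel₀ hab', one_smul]
      right_inv := fun u => by
        apply Subtype.ext
        show d ((a + b)⁻¹ • (b • adjoint d u.1 + a • S (adjoint d u.1))) = u.1
        rw [map_smul, (bwd u.1 ((hmem2 _).mp u.2)).2, smul_smul, inv_mul_cancel₀ hab', one_smul] }
  exact e.lift_rank_eq

lemma lemB (a b : ℂ) (d : H →L[ℂ] K) (hd : d ∘L adjoint d = 1)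
    (S : H →L[ℂ] H) (hS : IsSelfAdjoint S) (hS2 : S ∘L S = 1)
    (hb : b ≠ 0) (hab : a - b ≠ 0) (hab' : a + b ≠ 0) :
    LinearMap.ker ((S ∘L (a • (adjoint d ∘L d) + b • (1 - adjoint d ∘L d)) + b • (1 : H →L[ℂ] H) : H →L[ℂ] H) : H →ₗ[ℂ] H) =
      (LinearMap.ker (d : H →ₗ[ℂ] K) ⊓ LinearMap.ker ((S + 1 : H →L[ℂ] H) : H →ₗ[ℂ] H) : Submodule ℂ H) := by
  have hdd : ∀ u, d (adjoint d u) = u := fun u => by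
    simpa using ContinuousLinearMap.ext_iff.mp hd u
  have hSS : ∀ y, S (S y) = y := fun y => by
    simpa using ContinuousLinearMap.ext_iff.mp hS2 y
  ext x
  simp only [ContinuousLinearMap.coe_coe, LinearMap.mem_ker, Submodule.mem_inf, ContinuousLinearMap.add_apply,
    ContinuousLinearMap.comp_apply, ContinuousLinearMap.smul_apply,
    ContinuousLinearMap.sub_apply, ContinuousLinearMap.one_apply]
  constructor
  · intro hx
    -- hx : S (a • adjoint d (d x) + b • (x - adjoint d (d x))) + b • x = 0
    have hx1 : S (a • adjoint d (d x) + b • (x - adjoint d (d x))) = -(b • x) :=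
      eq_neg_of_add_eq_zero_left hx
    have hx2 : a • adjoint d (d x) + b • (x - adjoint d (d x)) = -(b • S x) := by
      have h := congrArg S hx1
      rw [hSS, map_neg, map_smul] at h
      exact h
    have hE : (a - b) • adjoint d (d x) = -(b • S x) - b • x := by
      rw [← hx2]; module
    have hSp : S (adjoint d (d x)) = adjoint d (d x) := by
      refine smul_right_injective H hab ?_
      show (a - b) • S (adjoint d (d x)) = (a - b) • adjoint d (d x)
      have h := congrArg S hE
      rw [map_smul, map_sub, map_neg, map_smul, map_smul, hSS] at h
      rw [h, hE]
      module
    have hip1 : ⟪adjoint d (d x), x⟫ = ⟪d x, d x⟫ :=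
      ContinuousLinearMap.adjoint_inner_left d x (d x)
    have hip3 : ⟪adjoint d (d x), adjoint d (d x)⟫ = ⟪d x, d x⟫ := by
      have h := ContinuousLinearMap.adjoint_inner_left d (adjoint d (d x)) (d x)
      rw [hdd] at h
      exact h
    have hip2 : ⟪adjoint d (d x), S x⟫ = ⟪d x, d x⟫ := by
      have h4 : ⟪S (adjoint d (d x)), x⟫ = ⟪adjoint d (d x), S x⟫ := by
        conv_lhs => rw [← hS.adjoint_eq]
        exact ContinuousLinearMap.adjoint_inner_left S x (adjoint d (d x))
      rw [← h4, hSp, hip1]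
    have hmain : ⟪adjoint d (d x), (a - b) • adjoint d (d x)⟫ =
        ⟪adjoint d (d x), -(b • S x) - b • x⟫ := by rw [hE]
    rw [inner_smul_right, inner_sub_right, inner_neg_right, inner_smul_right,
      inner_smul_right, hip1, hip2, hip3] at hmain
    have hI : ⟪d x, d x⟫ = 0 := by
      have h5 : (a + b) * ⟪d x, d x⟫ = 0 := by linear_combination hmain
      exact (mul_eq_zero.mp h5).resolve_left hab'
    have hdx0 : d x = 0 := inner_self_eq_zero.mp hI
    have hp0 : adjoint d (d x) = 0 := by rw [hdx0, map_zero]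
    have hSx : S x + x = 0 := by
      refine smul_right_injective H hb ?_
      show b • (S x + x) = b • 0
      have h6 : -(b • S x) - b • x = 0 := by rw [← hE, hp0, smul_zero]
      linear_combination (norm := module) -h6
    exact ⟨hdx0, hSx⟩
  · rintro ⟨hdx0, hSx⟩
    have hSx' : S x = -x := eq_neg_of_add_eq_zero_left hSx
    rw [hdx0, map_zero, smul_zero, zero_add, sub_zero, map_smul, hSx']
    module

end Aux

/-- Under the standing assumptions (as cardinals):
`dim ker(U − a) = dim ker(T − 1)`, `dim ker(U + a) = dim ker(T + 1)`,
`dim ker(U + b) = dim(ker d ⊓ ker(S + 1))`,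
`dim ker(U − b) = dim(ker d ⊓ ker(S − 1))`. -/
theorem stmt_15 {H : Type u_1} {K : Type u_2}
    [NormedAddCommGroup H] [InnerProductSpace ℂ H] [CompleteSpace H] [Nontrivial H]
    [NormedAddCommGroup K] [InnerProductSpace ℂ K] [CompleteSpace K] [Nontrivial K]
    (a b : ℝ)
    (d : H →L[ℂ] K) (hd : d ∘L (adjoint d) = 1)
    (S : H →L[ℂ] H) (hS : IsSelfAdjoint S) (hS2 : S ∘L S = 1)
    (C : H →L[ℂ] H)
    (hC : C = (a : ℂ) • ((adjoint d) ∘L d) + (b : ℂ) • (1 - (adjoint d) ∘L d))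
    (U : H →L[ℂ] H) (hU : U = S ∘L C)
    (T : K →L[ℂ] K) (hT : T = d ∘L S ∘L (adjoint d))
    (h1 : (adjoint d) ∘L d ≠ 1) (h2 : S ≠ 1) (h3 : S ≠ -1)
    (h4 : a ≠ b) (h5 : a ≠ -b) (h6 : a * b ≠ 0) :
    Cardinal.lift.{u_2}
        (Module.rank ℂ (LinearMap.ker ((U - (a : ℂ) • (1 : H →L[ℂ] H) : H →L[ℂ] H) : H →ₗ[ℂ] H))) =
      Cardinal.lift.{u_1}
        (Module.rank ℂ (LinearMap.ker ((T - (1 : K →L[ℂ] K) : K →L[ℂ] K) : K →ₗ[ℂ] K))) ∧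
    Cardinal.lift.{u_2}
        (Module.rank ℂ (LinearMap.ker ((U + (a : ℂ) • (1 : H →L[ℂ] H) : H →L[ℂ] H) : H →ₗ[ℂ] H))) =
      Cardinal.lift.{u_1}
        (Module.rank ℂ (LinearMap.ker ((T + (1 : K →L[ℂ] K) : K →L[ℂ] K) : K →ₗ[ℂ] K))) ∧
    Module.rank ℂ (LinearMap.ker ((U + (b : ℂ) • (1 : H →L[ℂ] H) : H →L[ℂ] H) : H →ₗ[ℂ] H)) =
      Module.rank ℂ (LinearMap.ker (d : H →ₗ[ℂ] K) ⊓ LinearMap.ker ((S + 1 : H →L[ℂ] H) : H →ₗ[ℂ] H) : Submodule ℂ H) ∧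
    Module.rank ℂ (LinearMap.ker ((U - (b : ℂ) • (1 : H →L[ℂ] H) : H →L[ℂ] H) : H →ₗ[ℂ] H)) =
      Module.rank ℂ (LinearMap.ker (d : H →ₗ[ℂ] K) ⊓ LinearMap.ker ((S - 1 : H →L[ℂ] H) : H →ₗ[ℂ] H) : Submodule ℂ H) := by
  subst hU hC hT
  have haR : a ≠ 0 := fun h => h6 (by rw [h, zero_mul])
  have hbR : b ≠ 0 := fun h => h6 (by rw [h, mul_zero])
  have ha : (a : ℂ) ≠ 0 := by exact_mod_cast haR
  have hb : (b : ℂ) ≠ 0 := by exact_mod_cast hbR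
  have hab : (a : ℂ) - (b : ℂ) ≠ 0 := sub_ne_zero.mpr (by exact_mod_cast h4)
  have hab' : (a : ℂ) + (b : ℂ) ≠ 0 := by
    intro h
    apply h5
    have : a + b = 0 := by exact_mod_cast h
    linarith
  have h2S : (-S) ∘L (-S) = 1 := by rw [neg_comp, comp_neg, neg_neg, hS2]
  refine ⟨?_, ?_, ?_, ?_⟩
  · exact lemA (a : ℂ) (b : ℂ) d hd S hS2 ha hab hab'
  · have hr := lemA (a : ℂ) (b : ℂ) d hd (-S) h2S ha hab hab'
    have e1 : LinearMap.ker (((-S) ∘L ((a : ℂ) • (adjoint d ∘L d) + (b : ℂ) • (1 - adjoint d ∘L d)) - (a : ℂ) • (1 : H →L[ℂ] H) : H →L[ℂ] H) : H →ₗ[ℂ] H) =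
        LinearMap.ker ((S ∘L ((a : ℂ) • (adjoint d ∘L d) + (b : ℂ) • (1 - adjoint d ∘L d)) + (a : ℂ) • (1 : H →L[ℂ] H) : H →L[ℂ] H) : H →ₗ[ℂ] H) := by
      ext x
      simp only [ContinuousLinearMap.coe_coe, LinearMap.mem_ker, ContinuousLinearMap.sub_apply, ContinuousLinearMap.add_apply,
        ContinuousLinearMap.comp_apply, ContinuousLinearMap.neg_apply,
        ContinuousLinearMap.smul_apply, ContinuousLinearMap.one_apply]
      constructor
      · intro h; linear_combination (norm := module) -h
      · intro h; linear_combination (norm := module) -h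
    have e2 : LinearMap.ker ((d ∘L (-S) ∘L adjoint d - (1 : K →L[ℂ] K) : K →L[ℂ] K) : K →ₗ[ℂ] K) =
        LinearMap.ker ((d ∘L S ∘L adjoint d + (1 : K →L[ℂ] K) : K →L[ℂ] K) : K →ₗ[ℂ] K) := by
      ext u
      simp only [ContinuousLinearMap.coe_coe, LinearMap.mem_ker, ContinuousLinearMap.sub_apply, ContinuousLinearMap.add_apply,
        ContinuousLinearMap.comp_apply, ContinuousLinearMap.neg_apply,
        ContinuousLinearMap.one_apply, map_neg]
      constructor
      · intro h; linear_combination (norm := module) -h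
      · intro h; linear_combination (norm := module) -h
    rw [e1, e2] at hr
    exact hr
  · rw [lemB (a : ℂ) (b : ℂ) d hd S hS hS2 hb hab hab']
  · have hB := lemB (a : ℂ) (b : ℂ) d hd (-S) hS.neg h2S hb hab hab'
    have e3 : LinearMap.ker ((S ∘L ((a : ℂ) • (adjoint d ∘L d) + (b : ℂ) • (1 - adjoint d ∘L d)) - (b : ℂ) • (1 : H →L[ℂ] H) : H →L[ℂ] H) : H →ₗ[ℂ] H) =
        LinearMap.ker (((-S) ∘L ((a : ℂ) • (adjoint d ∘L d) + (b : ℂ) • (1 - adjoint d ∘L d)) + (b : ℂ) • (1 : H →L[ℂ] H) : H →L[ℂ] H) : H →ₗ[ℂ] H) := by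
      ext x
      simp only [ContinuousLinearMap.coe_coe, LinearMap.mem_ker, ContinuousLinearMap.sub_apply, ContinuousLinearMap.add_apply,
        ContinuousLinearMap.comp_apply, ContinuousLinearMap.neg_apply,
        ContinuousLinearMap.smul_apply, ContinuousLinearMap.one_apply]
      constructor
      · intro h; linear_combination (norm := module) -h
      · intro h; linear_combination (norm := module) -h
    have e4 : LinearMap.ker (((-S) + (1 : H →L[ℂ] H) : H →L[ℂ] H) : H →ₗ[ℂ] H) = LinearMap.ker ((S - (1 : H →L[ℂ] H) : H →L[ℂ] H) : H →ₗ[ℂ] H) := by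
      ext x
      simp only [ContinuousLinearMap.coe_coe, LinearMap.mem_ker, ContinuousLinearMap.add_apply, ContinuousLinearMap.sub_apply,
        ContinuousLinearMap.neg_apply, ContinuousLinearMap.one_apply]
      constructor
      · intro h; linear_combination (norm := module) -h
      · intro h; linear_combination (norm := module) -h
    rw [e3, hB, e4]
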